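/- Let n ≥ 2 and t ≥ 0 be integers. An n×n integer matrix Z lies in the dilate t·P_n (i.e., the real matrix Z belongs to the set {t·Y : Y ∈ P_n}) if and only if Z has nonnegative entries, Z_{ij} = 0 for all j ≥ i+2, and all row sums and all column sums of Z equal t. -/

import Mathlib

/-- `T n` is the set of `n × n` permutation matrices `π` (with real entries)
such that `π i j = 0` whenever `j ≥ i + 2` (`0`-based indices). -/
def T (n : ℕ) : Set (Matrix (Fin n) (Fin n) ℝ) :=
  {M | ∃ σ : Equiv.Perm (Fin n),
    (∀ i : Fin n, (σ i : ℕ) ≤ (i : ℕ) + 1) ∧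
    M = Matrix.of fun i j => if σ i = j then (1 : ℝ) else 0}

/-- `P n` is the convex hull of `T n`. -/
def P (n : ℕ) : Set (Matrix (Fin n) (Fin n) ℝ) := convexHull ℝ (T n)

section Aux

variable {n t : ℕ} {Z : Matrix (Fin n) (Fin n) ℤ}

/-- The key counting identity: if all supradiagonal-forbidden entries vanish and
row/column sums are `t`, then for `a ≤ k < b` with `Z b a > 0` the entry
`Z k (k+1)` is positive. -/
lemma key_pos (hpos : ∀ i j, 0 ≤ Z i j) (hpat : ∀ i j : Fin n, (i:ℕ)+2 ≤ (j:ℕ) → Z i j = 0)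
    (hrow : ∀ i, ∑ j, Z i j = (t:ℤ)) (hcol : ∀ j, ∑ i, Z i j = (t:ℤ))
    (k b a : Fin n) (hk1 : (k:ℕ)+1 < n) (hab : (a:ℕ) ≤ (k:ℕ)) (hkb : (k:ℕ) < (b:ℕ))
    (hZ : 0 < Z b a) : 0 < Z k ⟨(k:ℕ)+1, hk1⟩ := by
  classical
  set S : Finset (Fin n) := Finset.univ.filter (fun x : Fin n => (x:ℕ) ≤ (k:ℕ)) with hS
  set Sc : Finset (Fin n) := Finset.univ.filter (fun x : Fin n => ¬ (x:ℕ) ≤ (k:ℕ)) with hSc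
  have e1 : ∑ i ∈ S, ∑ j ∈ S, Z i j + ∑ i ∈ Sc, ∑ j ∈ S, Z i j = ∑ j ∈ S, (t:ℤ) := by
    rw [Finset.sum_filter_add_sum_filter_not Finset.univ _ (fun i => ∑ j ∈ S, Z i j)]
    rw [show ∑ x, ∑ j ∈ S, Z x j = ∑ j ∈ S, ∑ x, Z x j from Finset.sum_comm]
    exact Finset.sum_congr rfl fun j _ => hcol j
  have e2 : ∑ i ∈ S, ∑ j ∈ S, Z i j + ∑ i ∈ S, ∑ j ∈ Sc, Z i j = ∑ i ∈ S, (t:ℤ) := by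
    rw [← Finset.sum_add_distrib]
    refine Finset.sum_congr rfl fun i _ => ?_
    rw [Finset.sum_filter_add_sum_filter_not Finset.univ _ (fun j => Z i j)]
    exact hrow i
  have e3 : ∑ i ∈ S, ∑ j ∈ Sc, Z i j = Z k ⟨(k:ℕ)+1, hk1⟩ := by
    have hkS : k ∈ S := by simp [hS]
    rw [Finset.sum_eq_single_of_mem k hkS]
    · refine Finset.sum_eq_single_of_mem (⟨(k:ℕ)+1, hk1⟩ : Fin n)
        (by simp only [hSc, Finset.mem_filter, Finset.mem_univ, true_and]; omega)
        fun j hj hne => ?_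
      have hj' : ¬ (j:ℕ) ≤ (k:ℕ) := by simpa [hSc] using hj
      have : (j:ℕ) ≠ (k:ℕ)+1 := fun h => hne (Fin.ext h)
      exact hpat k j (by omega)
    · intro i hi hne
      have hi' : (i:ℕ) ≤ (k:ℕ) := by simpa [hS] using hi
      have hine : (i:ℕ) ≠ (k:ℕ) := fun h => hne (Fin.ext h)
      refine Finset.sum_eq_zero fun j hj => ?_
      have hj' : ¬ (j:ℕ) ≤ (k:ℕ) := by simpa [hSc] using hj
      exact hpat i j (by omega)
  have e4 : Z b a ≤ ∑ i ∈ Sc, ∑ j ∈ S, Z i j := by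
    have h1 : Z b a ≤ ∑ j ∈ S, Z b j :=
      Finset.single_le_sum (fun j _ => hpos b j)
        (by simp only [hS, Finset.mem_filter, Finset.mem_univ, true_and]; exact hab)
    have h2 : ∑ j ∈ S, Z b j ≤ ∑ i ∈ Sc, ∑ j ∈ S, Z i j :=
      Finset.single_le_sum (fun i _ => Finset.sum_nonneg fun j _ => hpos i j)
        (by simp only [hSc, Finset.mem_filter, Finset.mem_univ, true_and]; omega)
    linarith
  have key : ∑ i ∈ Sc, ∑ j ∈ S, Z i j = Z k ⟨(k:ℕ)+1, hk1⟩ := by linarith [e1, e2, e3]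
  linarith

/-- Building the staircase permutation with positive entries, by peeling
intervals from the left. -/
lemma build (ht : 1 ≤ t) (hpos : ∀ i j, 0 ≤ Z i j)
    (hpat : ∀ i j : Fin n, (i:ℕ)+2 ≤ (j:ℕ) → Z i j = 0)
    (hrow : ∀ i, ∑ j, Z i j = (t:ℤ)) (hcol : ∀ j, ∑ i, Z i j = (t:ℤ)) :
    ∀ m a, a ≤ n → n - a = m →
      (a = 0 ∨ ∃ (ha : a - 1 < n) (c : Fin n), (c:ℕ) < a ∧ 0 < Z ⟨a-1, ha⟩ c) →
      ∃ σ : Equiv.Perm (Fin n), (∀ i : Fin n, (i:ℕ) < a → σ i = i) ∧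
        ∀ i : Fin n, a ≤ (i:ℕ) → (σ i : ℕ) ≤ (i:ℕ) + 1 ∧ 0 < Z i (σ i) ∧ a ≤ ((σ i):ℕ) := by
  intro m
  induction m using Nat.strong_induction_on with
  | _ m IH =>
    intro a han hm H
    rcases Nat.lt_or_ge a n with hlt | hge
    · -- a < n
      set aF : Fin n := ⟨a, hlt⟩ with haF
      -- step 1 : find b
      have hb : ∃ b : Fin n, a ≤ (b:ℕ) ∧ 0 < Z b aF := by
        by_contra h'
        push_neg at h'
        have hz : ∀ b : Fin n, a ≤ (b:ℕ) → Z b aF = 0 := fun b hb =>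
          le_antisymm (h' b hb) (hpos b aF)
        rcases Nat.eq_zero_or_pos a with rfl | hapos
        · have := hcol aF
          rw [Finset.sum_eq_zero (fun i _ => hz i (Nat.zero_le _))] at this
          omega
        · rcases H with h0 | ⟨ha1, c, hc, hZc⟩
          · omega
          set aP : Fin n := ⟨a-1, ha1⟩ with haP
          have hcolval : ∑ i, Z i aF = Z aP aF := by
            refine Finset.sum_eq_single_of_mem aP (Finset.mem_univ _) fun i _ hne => ?_
            have : (i:ℕ) ≠ a - 1 := fun h => hne (Fin.ext h)
            rcases Nat.lt_or_ge (i:ℕ) a with h2 | h2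
            · exact hpat i aF (by simp only [haF, Fin.val_mk]; omega)
            · exact hz i h2
          have hsum := hrow aP
          have h1 : Z aP aF + Z aP c ≤ ∑ j, Z aP j := by
            have hc' : c ∈ Finset.univ.erase aF := by
              simp only [Finset.mem_erase, Finset.mem_univ, and_true]
              exact fun h => by simp only [h, haF, Fin.val_mk] at hc; omega
            calc Z aP aF + Z aP c
                ≤ Z aP aF + ∑ j ∈ Finset.univ.erase aF, Z aP j := by
                  have := Finset.single_le_sum (f := fun j => Z aP j)
                    (fun j _ => hpos aP j) hc'
                  linarith
              _ = ∑ j, Z aP j := Finset.add_sum_erase _ _ (Finset.mem_univ _)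
          rw [hcol aF] at hcolval
          rw [hsum] at h1
          omega
      obtain ⟨b, hab, hZba⟩ := hb
      -- step 2 : the cycle
      classical
      set f : Fin n → Fin n := fun i =>
        if h2 : a ≤ (i:ℕ) ∧ (i:ℕ) < (b:ℕ) then ⟨(i:ℕ)+1, by omega⟩
        else if (i:ℕ) = (b:ℕ) then aF else i with hf
      have hval : ∀ i : Fin n, (f i : ℕ) =
          if a ≤ (i:ℕ) ∧ (i:ℕ) < (b:ℕ) then (i:ℕ)+1
          else if (i:ℕ) = (b:ℕ) then a else (i:ℕ) := by
        intro i
        simp only [hf]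
        split_ifs with h1 h2 <;> rfl
      have hf3 : ∀ i : Fin n, ((i:ℕ) < a ∨ (b:ℕ) < (i:ℕ)) → f i = i := by
        intro i hi
        apply Fin.ext
        have := hval i
        rw [if_neg (by omega), if_neg (by omega)] at this
        exact this
      have hcases : ∀ i : Fin n,
          ((f i : ℕ) = (i:ℕ)+1 ∧ a ≤ (i:ℕ) ∧ (i:ℕ) < (b:ℕ)) ∨
          ((f i : ℕ) = a ∧ (i:ℕ) = (b:ℕ)) ∨
          ((f i : ℕ) = (i:ℕ) ∧ (i:ℕ) ≠ (b:ℕ) ∧ ¬(a ≤ (i:ℕ) ∧ (i:ℕ) < (b:ℕ))) := by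
        intro i
        have h := hval i
        by_cases h1 : a ≤ (i:ℕ) ∧ (i:ℕ) < (b:ℕ)
        · rw [if_pos h1] at h; exact Or.inl ⟨h, h1⟩
        · rw [if_neg h1] at h
          by_cases h2 : (i:ℕ) = (b:ℕ)
          · rw [if_pos h2] at h; exact Or.inr (Or.inl ⟨h, h2⟩)
          · rw [if_neg h2] at h; exact Or.inr (Or.inr ⟨h, h2, h1⟩)
      have hinj : Function.Injective f := by
        intro x y hxy
        have hv : (f x : ℕ) = (f y : ℕ) := congrArg Fin.val hxy
        have Hx := hcases x
        have Hy := hcases y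
        apply Fin.ext
        rcases Hx with ⟨e1, e2, e3⟩ | ⟨e1, e2⟩ | ⟨e1, e2, e3⟩ <;>
          rcases Hy with ⟨g1, g2, g3⟩ | ⟨g1, g2⟩ | ⟨g1, g2, g3⟩ <;> omega
      let c : Equiv.Perm (Fin n) := Equiv.ofBijective f (Finite.injective_iff_bijective.mp hinj)
      have hc_apply : ∀ i, c i = f i := fun i => rfl
      -- step 3 : recursion
      have hbn : (b:ℕ) < n := b.isLt
      obtain ⟨σ', hσ'fix, hσ'⟩ := IH (n - ((b:ℕ)+1)) (by omega) ((b:ℕ)+1) (by omega) rfl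
        (Or.inr ⟨by omega, aF, by simp only [haF, Fin.val_mk]; omega, by
          convert hZba using 2; exact Fin.ext (by simp)⟩)
      refine ⟨σ'.trans c, ?_, ?_⟩
      · intro i hi
        have h1 : σ' i = i := hσ'fix i (by omega)
        simp only [Equiv.trans_apply, h1, hc_apply]
        exact hf3 i (Or.inl hi)
      · intro i hi
        rcases Nat.lt_or_ge (i:ℕ) ((b:ℕ)+1) with h2 | h2
        · -- a ≤ i ≤ b
          have h1 : σ' i = i := hσ'fix i h2
          simp only [Equiv.trans_apply, h1, hc_apply]
          rcases Nat.lt_or_ge (i:ℕ) (b:ℕ) with h3 | h3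
          · have hk1 : (i:ℕ)+1 < n := by omega
            have hfe : f i = ⟨(i:ℕ)+1, hk1⟩ := by
              apply Fin.ext
              have := hval i
              rw [if_pos ⟨hi, h3⟩] at this
              exact this
            rw [hfe]
            refine ⟨?_, key_pos hpos hpat hrow hcol i b aF hk1 hi h3 hZba, ?_⟩ <;>
              simp only [Fin.val_mk] <;> omega
          · have hib : i = b := Fin.ext (by omega)
            have hfb : f b = aF := by
              apply Fin.ext
              have := hval b
              rw [if_neg (by omega), if_pos rfl] at this
              exact this
            rw [hib, hfb]
            refine ⟨?_, hZba, ?_⟩ <;> simp only [haF, Fin.val_mk] <;> omega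
        · obtain ⟨hle, hZpos, hge⟩ := hσ' i h2
          have : f (σ' i) = σ' i := hf3 (σ' i) (Or.inr (by omega))
          simp only [Equiv.trans_apply, hc_apply, this]
          exact ⟨hle, hZpos, by omega⟩
    · -- a ≥ n : suffix empty
      refine ⟨Equiv.refl _, fun i _ => rfl, fun i hi => absurd i.isLt (by omega)⟩

end Aux

/-- The closed convex conditions satisfied by `P n`. -/
def Cset (n : ℕ) : Set (Matrix (Fin n) (Fin n) ℝ) :=
  {M | (∀ i j, 0 ≤ M i j) ∧ (∀ i j : Fin n, (i:ℕ)+2 ≤ (j:ℕ) → M i j = 0) ∧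
    (∀ i, ∑ j, M i j = 1) ∧ (∀ j, ∑ i, M i j = 1)}

lemma convex_Cset (n : ℕ) : Convex ℝ (Cset n) := by
  intro x hx y hy p q hp hq hpq
  obtain ⟨hx1, hx2, hx3, hx4⟩ := hx
  obtain ⟨hy1, hy2, hy3, hy4⟩ := hy
  have happ : ∀ i j, (p • x + q • y) i j = p * x i j + q * y i j := by
    intro i j
    simp [Matrix.add_apply, Matrix.smul_apply, smul_eq_mul]
  refine ⟨fun i j => ?_, fun i j h => ?_, fun i => ?_, fun j => ?_⟩
  · rw [happ]; exact add_nonneg (mul_nonneg hp (hx1 i j)) (mul_nonneg hq (hy1 i j))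
  · rw [happ, hx2 i j h, hy2 i j h]; ring
  · simp only [happ]
    rw [Finset.sum_add_distrib, ← Finset.mul_sum, ← Finset.mul_sum, hx3 i, hy3 i]
    linarith
  · simp only [happ]
    rw [Finset.sum_add_distrib, ← Finset.mul_sum, ← Finset.mul_sum, hx4 j, hy4 j]
    linarith

lemma T_subset_Cset (n : ℕ) : T n ⊆ Cset n := by
  rintro M ⟨σ, hσ, rfl⟩
  refine ⟨fun i j => ?_, fun i j h => ?_, fun i => ?_, fun j => ?_⟩
  · simp only [Matrix.of_apply]; split <;> norm_num
  · simp only [Matrix.of_apply]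
    rw [if_neg]
    intro he
    have := hσ i
    rw [he] at this
    omega
  · simp [Matrix.of_apply]
  · simp only [Matrix.of_apply]
    have : ∀ i : Fin n, (σ i = j) ↔ (i = σ.symm j) := by
      intro i; exact Equiv.apply_eq_iff_eq_symm_apply σ
    simp only [this]
    simp

lemma P_subset_Cset (n : ℕ) : P n ⊆ Cset n :=
  convexHull_min (T_subset_Cset n) (convex_Cset n)

lemma perm_mem_T {n : ℕ} (σ : Equiv.Perm (Fin n)) (hσ : ∀ i : Fin n, (σ i : ℕ) ≤ (i : ℕ) + 1) :
    (Matrix.of fun i j => if σ i = j then (1 : ℝ) else 0) ∈ T n := ⟨σ, hσ, rfl⟩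

lemma col_sum_perm {n : ℕ} (σ : Equiv.Perm (Fin n)) (j : Fin n) :
    ∑ i, (if σ i = j then (1:ℤ) else 0) = 1 := by
  have h : ∀ i : Fin n, (σ i = j) ↔ (i = σ.symm j) := fun i =>
    Equiv.apply_eq_iff_eq_symm_apply σ
  simp only [h]
  simp

lemma reverse_dir {n : ℕ} (t : ℕ) (Z : Matrix (Fin n) (Fin n) ℤ)
    (h1 : ∀ i j : Fin n, 0 ≤ Z i j)
    (h2 : ∀ i j : Fin n, (i : ℕ) + 2 ≤ (j : ℕ) → Z i j = 0)
    (h3 : ∀ i : Fin n, ∑ j, Z i j = (t : ℤ))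
    (h4 : ∀ j : Fin n, ∑ i, Z i j = (t : ℤ)) :
    ∃ Y ∈ P n, (t : ℝ) • Y = Matrix.of fun i j => (Z i j : ℝ) := by
  induction t generalizing Z with
  | zero =>
    have hz : ∀ i j, Z i j = 0 := by
      intro i j
      have := (Finset.sum_eq_zero_iff_of_nonneg (fun j _ => h1 i j)).mp
        (by exact_mod_cast h3 i) j (Finset.mem_univ j)
      exact this
    refine ⟨Matrix.of fun i j => if (Equiv.refl (Fin n)) i = j then (1:ℝ) else 0,
      subset_convexHull ℝ (T n) (perm_mem_T _ (fun i => by simp)), ?_⟩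
    ext i j
    simp [hz i j]
  | succ t IH =>
    obtain ⟨σ, -, hσ⟩ := build (t := t+1) (Z := Z) (by omega) h1 h2 h3 h4 n 0 (by omega)
      (by omega) (Or.inl rfl)
    have hσle : ∀ i : Fin n, (σ i : ℕ) ≤ (i:ℕ)+1 := fun i => (hσ i (Nat.zero_le _)).1
    have hσpos : ∀ i : Fin n, 0 < Z i (σ i) := fun i => (hσ i (Nat.zero_le _)).2.1
    set Z' : Matrix (Fin n) (Fin n) ℤ :=
      Matrix.of fun i j => Z i j - (if σ i = j then 1 else 0) with hZ'
    have hZ'app : ∀ i j, Z' i j = Z i j - (if σ i = j then 1 else 0) := fun i j => rfl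
    have g1 : ∀ i j : Fin n, 0 ≤ Z' i j := by
      intro i j
      rw [hZ'app]
      by_cases h : σ i = j
      · rw [if_pos h, ← h]; have := hσpos i; omega
      · rw [if_neg h]; have := h1 i j; omega
    have g2 : ∀ i j : Fin n, (i : ℕ) + 2 ≤ (j : ℕ) → Z' i j = 0 := by
      intro i j h
      rw [hZ'app, h2 i j h, if_neg]
      · ring
      · intro he; have := hσle i; rw [he] at this; omega
    have g3 : ∀ i : Fin n, ∑ j, Z' i j = (t : ℤ) := by
      intro i
      simp only [hZ'app]
      rw [Finset.sum_sub_distrib, h3 i]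
      simp only [Finset.sum_ite_eq, Finset.mem_univ, if_true]
      push_cast
      ring
    have g4 : ∀ j : Fin n, ∑ i, Z' i j = (t : ℤ) := by
      intro j
      simp only [hZ'app]
      rw [Finset.sum_sub_distrib, h4 j, col_sum_perm σ j]
      push_cast
      ring
    obtain ⟨Y', hY'P, hY'eq⟩ := IH Z' g1 g2 g3 g4
    set π : Matrix (Fin n) (Fin n) ℝ := Matrix.of fun i j => if σ i = j then (1:ℝ) else 0 with hπ
    have hπP : π ∈ P n := subset_convexHull ℝ (T n) (perm_mem_T σ hσle)
    have htne : ((t:ℝ)+1) ≠ 0 := by positivity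
    refine ⟨((t:ℝ)/((t:ℝ)+1)) • Y' + (1/((t:ℝ)+1)) • π, ?_, ?_⟩
    · exact (convex_convexHull ℝ (T n)) hY'P hπP (by positivity) (by positivity)
        (by field_simp)
    · ext i j
      have hent : (t:ℝ) * Y' i j = (Z i j : ℝ) - (if σ i = j then 1 else 0) := by
        have := congrFun (congrFun hY'eq i) j
        simp only [Matrix.smul_apply, smul_eq_mul, Matrix.of_apply] at this
        rw [this, hZ'app]
        push_cast
        by_cases h : σ i = j <;> simp [h]
      simp only [Matrix.add_apply, Matrix.smul_apply, smul_eq_mul, Matrix.of_apply, hπ]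
      push_cast
      by_cases h : σ i = j
      · rw [if_pos h] at hent ⊢
        field_simp
        linarith
      · rw [if_neg h] at hent ⊢
        field_simp
        linarith

/-- Let `n ≥ 2`, `t ≥ 0`.  An `n × n` integer matrix `Z` lies in the dilate
`t • P n` (i.e. the real matrix with entries `Z i j` belongs to
`{t • Y | Y ∈ P n}`) if and only if `Z` has nonnegative entries, `Z i j = 0`
for `j ≥ i + 2`, and all row and column sums of `Z` equal `t`. -/
theorem mem_dilate_iff (n : ℕ) (hn : 2 ≤ n) (t : ℕ)
    (Z : Matrix (Fin n) (Fin n) ℤ) :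
    (∃ Y ∈ P n, (t : ℝ) • Y = Matrix.of fun i j => (Z i j : ℝ)) ↔
      ((∀ i j : Fin n, 0 ≤ Z i j) ∧
       (∀ i j : Fin n, (i : ℕ) + 2 ≤ (j : ℕ) → Z i j = 0) ∧
       (∀ i : Fin n, ∑ j, Z i j = (t : ℤ)) ∧
       (∀ j : Fin n, ∑ i, Z i j = (t : ℤ))) := by
  constructor
  · rintro ⟨Y, hYP, hEq⟩
    obtain ⟨hC1, hC2, hC3, hC4⟩ := P_subset_Cset n hYP
    have he : ∀ i j, (t:ℝ) * Y i j = (Z i j : ℝ) := by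
      intro i j
      have := congrFun (congrFun hEq i) j
      simpa [Matrix.smul_apply, smul_eq_mul] using this
    refine ⟨fun i j => ?_, fun i j h => ?_, fun i => ?_, fun j => ?_⟩
    · have : (0:ℝ) ≤ (Z i j : ℝ) := by
        rw [← he i j]
        exact mul_nonneg (by positivity) (hC1 i j)
      exact_mod_cast this
    · have : (Z i j : ℝ) = 0 := by rw [← he i j, hC2 i j h, mul_zero]
      exact_mod_cast this
    · have : ((∑ j, Z i j : ℤ) : ℝ) = (t : ℝ) := by
        push_cast
        rw [Finset.sum_congr rfl (fun j _ => (he i j).symm), ← Finset.mul_sum, hC3 i,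
          mul_one]
      exact_mod_cast this
    · have : ((∑ i, Z i j : ℤ) : ℝ) = (t : ℝ) := by
        push_cast
        rw [Finset.sum_congr rfl (fun i _ => (he i j).symm), ← Finset.mul_sum, hC4 j,
          mul_one]
      exact_mod_cast this
  · rintro ⟨h1, h2, h3, h4⟩
    exact reverse_dir t Z h1 h2 h3 h4
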